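/- (Hook-content type product formula at q=ξ=1) With Z_N = S^N ∏_{i=0}^{N-1}(x+i) and K_λ = det(Z_{λ_i+2n-i-j})_{i,j=1}^n / det(Z_{2n-i-j})_{i,j=1}^n, one has for every partition λ = (λ_1,...,λ_n): K_λ = S^|λ| · ∏_{z∈λ} (x + h(z) - 1) · ∏_{1≤i<j≤n} [(x + λ_i - λ_j + j - i - 1)(λ_i - λ_j + j - i)] / [(x + j - i - 1)(j - i)], where h(z) is the hook length of cell z in the Young diagram of λ and |λ| = Σ λ_i. -/

import Mathlib

noncomputable section
namespace Stmt16

/-- The field of rational functions `ℚ(S, x)`. -/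
abbrev K : Type := FractionRing (MvPolynomial (Fin 2) ℚ)

def S : K := algebraMap (MvPolynomial (Fin 2) ℚ) K (MvPolynomial.X 0)
def x : K := algebraMap (MvPolynomial (Fin 2) ℚ) K (MvPolynomial.X 1)

/-- `Z_N = S^N ∏_{i=0}^{N-1} (x+i)`. -/
def Z (N : ℕ) : K := S ^ N * ∏ i ∈ Finset.range N, (x + (i : K))

/-- For a partition `μ = (μ_1,…,μ_m)` (0-indexed),
`K_μ = det(Z_{μ_i+2m-i-j})_{i,j=1}^m / det(Z_{2m-i-j})_{i,j=1}^m`. -/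
def Kmom (m : ℕ) (μ : Fin m → ℕ) : K :=
  (Matrix.of fun i j : Fin m => Z (μ i + (2 * m - 2 - (i : ℕ) - (j : ℕ)))).det /
    (Matrix.of fun i j : Fin m => Z (2 * m - 2 - (i : ℕ) - (j : ℕ))).det

/-- `h(z) - 1` for the cell `z` in (0-indexed) row `i` and column `j` of the Young
diagram of `λ`: the hook length is `arm + leg + 1` where `arm = λ_i - j - 1` and
`leg = #{k > i | λ_k > j}`. -/
def hookm1 (n : ℕ) (lam : Fin n → ℕ) (i : Fin n) (j : ℕ) : ℕ :=
  (lam i - 1 - j) + (Finset.univ.filter (fun k : Fin n => i < k ∧ j < lam k)).card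

lemma S_ne : S ≠ 0 := by
  simp only [S, ne_eq, map_eq_zero_iff _ (IsFractionRing.injective (MvPolynomial (Fin 2) ℚ) K)]
  exact MvPolynomial.X_ne_zero 0

lemma x_add_ne (c : ℕ) : x + (c : K) ≠ 0 := by
  have h : x + (c : K) = algebraMap (MvPolynomial (Fin 2) ℚ) K
      (MvPolynomial.X 1 + MvPolynomial.C (c : ℚ)) := by
    rw [map_add, x]
    congr 1
    rw [show MvPolynomial.C ((c:ℕ):ℚ) = ((c : ℕ) : MvPolynomial (Fin 2) ℚ) from
      (MvPolynomial.C_eq_coe_nat c)]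
    exact (map_natCast _ c).symm
  rw [h, ne_eq, map_eq_zero_iff _ (IsFractionRing.injective (MvPolynomial (Fin 2) ℚ) K)]
  intro hz
  have h2 := congrArg (MvPolynomial.eval (fun _ => (1 : ℚ))) hz
  simp at h2
  have : (0:ℚ) < 1 + c := by positivity
  linarith

lemma natc_ne (c : ℕ) (hc : 0 < c) : ((c : ℕ) : K) ≠ 0 :=
  Nat.cast_ne_zero.mpr hc.ne'


def R0 (t : ℕ) : K := ∏ m ∈ Finset.range t, (x + (m : K))

lemma detD (m : ℕ) (a : Fin m → ℕ) :
    (Matrix.of fun i j : Fin m => Z (a i + (m - 1 - (j:ℕ)))).det =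
      ((Equiv.Perm.sign (Fin.revPerm : Equiv.Perm (Fin m)) : ℤ) : K) *
        ((∏ i, (S ^ (a i) * R0 (a i))) * (∏ j : Fin m, S ^ ((j:ℕ))) *
          ∏ i : Fin m, ∏ j ∈ Finset.Ioi i, ((a j : K) - (a i : K))) := by
  set σ : Equiv.Perm (Fin m) := Fin.revPerm
  set M : Matrix (Fin m) (Fin m) K := Matrix.of fun i j : Fin m => Z (a i + (m - 1 - (j:ℕ)))
  set p : Fin m → Polynomial K := fun j => ∏ t ∈ Finset.range (j:ℕ),
    (Polynomial.X + Polynomial.C (t : K)) with hp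
  have hM : M.submatrix id σ = Matrix.of fun i j : Fin m =>
      (S ^ (a i) * R0 (a i)) * (S ^ ((j:ℕ)) * (p j).eval (x + (a i : K))) := by
    ext i j
    have hj := j.isLt
    simp only [M, σ, Matrix.submatrix_apply, Matrix.of_apply, id, Fin.revPerm_apply, Fin.val_rev]
    rw [show m - 1 - (m - ((j:ℕ) + 1)) = (j:ℕ) by omega]
    rw [Z, R0, pow_add, Finset.prod_range_add, Polynomial.eval_prod]
    have hq : ∏ t ∈ Finset.range (j:ℕ), (x + ((a i + t : ℕ) : K)) =
        ∏ t ∈ Finset.range (j:ℕ), Polynomial.eval (x + (a i : K))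
          (Polynomial.X + Polynomial.C ((t:ℕ):K)) := by
      refine Finset.prod_congr rfl fun t _ => ?_
      simp only [Polynomial.eval_add, Polynomial.eval_X, Polynomial.eval_C]
      push_cast; ring
    rw [hq]
    ring
  have hdegp : ∀ j : Fin m, (p j).natDegree = (j:ℕ) := by
    intro j
    rw [hp, Polynomial.natDegree_prod_of_monic _ _
      (fun t _ => Polynomial.monic_X_add_C _)]
    rw [Finset.sum_congr rfl (fun t _ => Polynomial.natDegree_X_add_C ((t:ℕ):K))]
    simp
  have hmonicp : ∀ j : Fin m, (p j).Monic :=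
    fun j => Polynomial.monic_prod_of_monic _ _ (fun t _ => Polynomial.monic_X_add_C _)
  have hperm := Matrix.det_permute' σ M
  rw [hM] at hperm
  have hdet2 : (Matrix.of fun i j : Fin m =>
      (S ^ (a i) * R0 (a i)) * (S ^ ((j:ℕ)) * (p j).eval (x + (a i : K)))).det =
      (∏ i, (S ^ (a i) * R0 (a i))) * ((∏ j : Fin m, S ^ ((j:ℕ))) *
        (Matrix.of fun i j : Fin m => (p j).eval (x + (a i : K))).det) := by
    refine (Matrix.det_mul_column (fun i => S ^ (a i) * R0 (a i))
      (Matrix.of fun i j : Fin m => S ^ ((j:ℕ)) * (p j).eval (x + (a i : K)))).trans ?_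
    congr 1
    exact Matrix.det_mul_row (fun j : Fin m => S ^ ((j:ℕ))) _
  have hvdm : (Matrix.of fun i j : Fin m => (p j).eval (x + (a i : K))).det =
      ∏ i : Fin m, ∏ j ∈ Finset.Ioi i, ((a j : K) - (a i : K)) := by
    rw [← Matrix.det_eval_matrixOfPolynomials_eq_det_vandermonde _ p hdegp hmonicp,
      Matrix.det_vandermonde]
    exact Finset.prod_congr rfl fun i _ => Finset.prod_congr rfl fun j _ => by ring
  rw [hdet2, hvdm] at hperm
  have hsgn : ((Equiv.Perm.sign σ : ℤ) : K) * ((Equiv.Perm.sign σ : ℤ) : K) = 1 := by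
    rcases Int.units_eq_one_or (Equiv.Perm.sign σ) with h | h <;> rw [h] <;> norm_num
  calc M.det = (((Equiv.Perm.sign σ : ℤ) : K) * ((Equiv.Perm.sign σ : ℤ) : K)) * M.det := by
        rw [hsgn, one_mul]
    _ = _ := by
        rw [mul_assoc]
        congr 1
        rw [← hperm]
        push_cast
        ring

lemma prodpairs {β : Type*} [CommMonoid β] {n : ℕ} (f : Fin n → Fin n → β) :
    ∏ p ∈ Finset.univ.filter (fun p : Fin n × Fin n => p.1 < p.2), f p.1 p.2
      = ∏ i : Fin n, ∏ j ∈ Finset.Ioi i, f i j := by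
  rw [Finset.prod_filter, Fintype.prod_prod_type]
  refine Finset.prod_congr rfl fun i _ => ?_
  rw [← Finset.prod_filter, Finset.filter_lt_eq_Ioi]

lemma prod_Ioi_shift {β : Type*} [CommMonoid β] {n : ℕ} (i : Fin n) (g : ℕ → β) :
    ∏ k ∈ Finset.Ioi i, g ((k:ℕ) - (i:ℕ) - 1) = ∏ t ∈ Finset.range (n - 1 - (i:ℕ)), g t := by
  refine (Finset.prod_bij (fun t ht => (⟨(i:ℕ) + 1 + t, ?_⟩ : Fin n)) ?_ ?_ ?_ ?_).symm
  · have := Finset.mem_range.mp ht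
    have := i.isLt
    omega
  · intro t ht
    simp only [Finset.mem_Ioi]
    exact Fin.lt_def.mpr (by simp; omega)
  · intro a ha b hb hab
    have := congrArg Fin.val hab
    simpa using this
  · intro k hk
    have hik : i < k := Finset.mem_Ioi.mp hk
    have h1 : (i:ℕ) < (k:ℕ) := Fin.lt_def.mp hik
    have h2 := k.isLt
    refine ⟨(k:ℕ) - (i:ℕ) - 1, Finset.mem_range.mpr (by omega), ?_⟩
    ext
    simp
    omega
  · intro t ht
    congr 1
    simp
    omega

lemma hookrow (n : ℕ) (lam : Fin n → ℕ) (hlam : Antitone lam) (i : Fin n) :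
    R0 (lam i + (n - 1 - (i:ℕ))) =
      (∏ j ∈ Finset.range (lam i), (x + (hookm1 n lam i j : K))) *
      ∏ k ∈ Finset.Ioi i, (x + (((lam i - lam k) + ((k:ℕ) - (i:ℕ) - 1) : ℕ) : K)) := by
  classical
  set μ : ℕ := lam i + (n - 1 - (i:ℕ)) with hμ
  set c : ℕ → ℕ := fun j => (Finset.univ.filter (fun k : Fin n => i < k ∧ j < lam k)).card with hc
  set h : ℕ → ℕ := hookm1 n lam i with hh
  set d : Fin n → ℕ := fun k => (lam i - lam k) + ((k:ℕ) - (i:ℕ) - 1) with hd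
  have hval : ∀ j, h j = (lam i - 1 - j) + c j := fun j => rfl
  have cmono : ∀ j j', j ≤ j' → c j' ≤ c j := by
    intro j j' hjj
    refine Finset.card_le_card fun k hk => ?_
    simp only [Finset.mem_filter, Finset.mem_univ, true_and] at hk ⊢
    exact ⟨hk.1, lt_of_le_of_lt hjj hk.2⟩
  have cle : ∀ j, c j ≤ n - 1 - (i:ℕ) := by
    intro j
    calc c j ≤ (Finset.Ioi i).card := by
          refine Finset.card_le_card fun k hk => ?_
          simp only [Finset.mem_filter] at hk
          exact Finset.mem_Ioi.mpr hk.2.1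
      _ = n - 1 - (i:ℕ) := Fin.card_Ioi i
  have hlt : ∀ j, j < lam i → h j < μ := by
    intro j hj
    have := cle j
    rw [hval]
    omega
  have dlt : ∀ k, i < k → d k < μ := by
    intro k hik
    have h1 : lam k ≤ lam i := hlam hik.le
    have h2 := k.isLt
    have h3 : (i:ℕ) < (k:ℕ) := Fin.lt_def.mp hik
    simp only [hd]
    omega
  have hdisj : ∀ j, j < lam i → ∀ k, i < k → h j ≠ d k := by
    intro j hj k hik heq
    have hlamk : lam k ≤ lam i := hlam hik.le
    have h3 : (i:ℕ) < (k:ℕ) := Fin.lt_def.mp hik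
    rcases le_or_gt (lam k) j with hle | hgt
    · have hsub : (Finset.univ.filter (fun k' : Fin n => i < k' ∧ j < lam k'))
          ⊆ Finset.Ioo i k := by
        intro k' hk'
        simp only [Finset.mem_filter] at hk'
        refine Finset.mem_Ioo.mpr ⟨hk'.2.1, ?_⟩
        by_contra hkk
        push_neg at hkk
        have : lam k' ≤ lam k := hlam hkk
        omega
      have hcard : c j ≤ (k:ℕ) - (i:ℕ) - 1 := by
        calc c j ≤ (Finset.Ioo i k).card := Finset.card_le_card hsub
          _ = (k:ℕ) - (i:ℕ) - 1 := Fin.card_Ioo i k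
      rw [hval] at heq
      simp only [hd] at heq
      omega
    · have hsub : Finset.Ioc i k ⊆
          (Finset.univ.filter (fun k' : Fin n => i < k' ∧ j < lam k')) := by
        intro k' hk'
        rw [Finset.mem_Ioc] at hk'
        refine Finset.mem_filter.mpr ⟨Finset.mem_univ _, hk'.1, ?_⟩
        have : lam k ≤ lam k' := hlam hk'.2
        omega
      have hcard : (k:ℕ) - (i:ℕ) ≤ c j := by
        calc (k:ℕ) - (i:ℕ) = (Finset.Ioc i k).card := (Fin.card_Ioc i k).symm
          _ ≤ c j := Finset.card_le_card hsub
      rw [hval] at heq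
      simp only [hd] at heq
      omega
  have hinj : ∀ a ∈ Finset.range (lam i), ∀ b ∈ Finset.range (lam i), h a = h b → a = b := by
    intro a ha b hb hab
    rw [Finset.mem_range] at ha hb
    by_contra hne
    rcases Nat.lt_or_ge a b with hl | hl
    · have h1 : c b ≤ c a := cmono a b hl.le
      rw [hval, hval] at hab
      omega
    · have hl' : b < a := by omega
      have h1 : c a ≤ c b := cmono b a hl'.le
      rw [hval, hval] at hab
      omega
  have dinj : ∀ a ∈ Finset.Ioi i, ∀ b ∈ Finset.Ioi i, d a = d b → a = b := by
    intro a ha b hb hab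
    rw [Finset.mem_Ioi] at ha hb
    by_contra hne
    have hne' : (a:ℕ) ≠ (b:ℕ) := fun hcc => hne (Fin.ext hcc)
    have hia : (i:ℕ) < (a:ℕ) := Fin.lt_def.mp ha
    have hib : (i:ℕ) < (b:ℕ) := Fin.lt_def.mp hb
    rcases Nat.lt_or_ge (a:ℕ) (b:ℕ) with hl | hl
    · have h1 : lam b ≤ lam a := hlam (le_of_lt (Fin.lt_def.mpr hl))
      have h2 : lam a ≤ lam i := hlam ha.le
      simp only [hd] at hab
      omega
    · have hl' : (b:ℕ) < (a:ℕ) := by omega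
      have h1 : lam a ≤ lam b := hlam (le_of_lt (Fin.lt_def.mpr hl'))
      have h2 : lam b ≤ lam i := hlam hb.le
      simp only [hd] at hab
      omega
  set A : Finset ℕ := (Finset.range (lam i)).image h with hA
  set B : Finset ℕ := (Finset.Ioi i).image d with hB
  have hABdisj : Disjoint A B := by
    rw [Finset.disjoint_left]
    intro a haA haB
    rw [hA, Finset.mem_image] at haA
    rw [hB, Finset.mem_image] at haB
    obtain ⟨j, hj, hja⟩ := haA
    obtain ⟨k, hk, hka⟩ := haB
    exact hdisj j (Finset.mem_range.mp hj) k (Finset.mem_Ioi.mp hk) (by rw [hja, hka])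
  have hcardA : A.card = lam i := by
    rw [hA, Finset.card_image_of_injOn fun a ha b hb => hinj a ha b hb, Finset.card_range]
  have hcardB : B.card = n - 1 - (i:ℕ) := by
    rw [hB, Finset.card_image_of_injOn fun a ha b hb => dinj a ha b hb, Fin.card_Ioi]
  have hunion : A ∪ B = Finset.range μ := by
    refine Finset.eq_of_subset_of_card_le ?_ ?_
    · intro a ha
      rcases Finset.mem_union.mp ha with haA | haB
      · rw [hA, Finset.mem_image] at haA
        obtain ⟨j, hj, hja⟩ := haA
        exact Finset.mem_range.mpr (hja ▸ hlt j (Finset.mem_range.mp hj))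
      · rw [hB, Finset.mem_image] at haB
        obtain ⟨k, hk, hka⟩ := haB
        exact Finset.mem_range.mpr (hka ▸ dlt k (Finset.mem_Ioi.mp hk))
    · rw [Finset.card_union_of_disjoint hABdisj, hcardA, hcardB, Finset.card_range]
  have : R0 μ = ∏ m ∈ A ∪ B, (x + (m : K)) := by rw [hunion]; rfl
  rw [this, Finset.prod_union hABdisj, hA, hB,
    Finset.prod_image fun a ha b hb => hinj a ha b hb,
    Finset.prod_image fun a ha b hb => dinj a ha b hb]

set_option maxHeartbeats 2000000 in
/-- Hook-content type product formula at `q = ξ = 1`: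
`K_λ = S^|λ| ∏_{z∈λ} (x+h(z)-1) ·
  ∏_{i<j} (x+λ_i-λ_j+j-i-1)(λ_i-λ_j+j-i) / ((x+j-i-1)(j-i))`. -/
theorem stmt16 (n : ℕ) (lam : Fin n → ℕ) (hlam : Antitone lam) :
    Kmom n lam =
      S ^ (∑ i, lam i) *
        (∏ i : Fin n, ∏ j ∈ Finset.range (lam i), (x + (hookm1 n lam i j : K))) *
        ∏ p ∈ Finset.univ.filter (fun p : Fin n × Fin n => p.1 < p.2),
          (x + ((lam p.1 - lam p.2 : ℕ) : K) + (((p.2 : ℕ) - (p.1 : ℕ) - 1 : ℕ) : K)) *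
              (((lam p.1 - lam p.2) + ((p.2 : ℕ) - (p.1 : ℕ)) : ℕ) : K) /
            ((x + (((p.2 : ℕ) - (p.1 : ℕ) - 1 : ℕ) : K)) * (((p.2 : ℕ) - (p.1 : ℕ) : ℕ) : K)) := by
  classical
  set μf : Fin n → ℕ := fun i => lam i + (n - 1 - (i:ℕ)) with hμf
  set νf : Fin n → ℕ := fun i => n - 1 - (i:ℕ) with hνf
  have hnum : (Matrix.of fun i j : Fin n => Z (lam i + (2 * n - 2 - (i:ℕ) - (j:ℕ)))) =
      (Matrix.of fun i j : Fin n => Z (μf i + (n - 1 - (j:ℕ)))) := by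
    ext i j
    have hi := i.isLt
    have hj := j.isLt
    simp only [Matrix.of_apply, μf]
    congr 1
    omega
  have hden : (Matrix.of fun i j : Fin n => Z (2 * n - 2 - (i:ℕ) - (j:ℕ))) =
      (Matrix.of fun i j : Fin n => Z (νf i + (n - 1 - (j:ℕ)))) := by
    ext i j
    have hi := i.isLt
    have hj := j.isLt
    simp only [Matrix.of_apply, νf]
    congr 1
    omega
  rw [Kmom, hnum, hden, detD n μf, detD n νf]
  -- abbreviations
  set ε : K := ((Equiv.Perm.sign (Fin.revPerm : Equiv.Perm (Fin n)) : ℤ) : K) with hε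
  set Hook : K := ∏ i : Fin n, ∏ j ∈ Finset.range (lam i), (x + (hookm1 n lam i j : K)) with hHook
  set Pd : K := ∏ i : Fin n, ∏ k ∈ Finset.Ioi i,
    (x + (((lam i - lam k) + ((k:ℕ) - (i:ℕ) - 1) : ℕ) : K)) with hPd
  set Pe : K := ∏ i : Fin n, ∏ k ∈ Finset.Ioi i,
    (x + ((((k:ℕ) - (i:ℕ) - 1) : ℕ) : K)) with hPe
  set P3 : K := ∏ i : Fin n, ∏ j ∈ Finset.Ioi i,
    (((lam i - lam j + ((j:ℕ) - (i:ℕ))) : ℕ) : K) with hP3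
  set P4 : K := ∏ i : Fin n, ∏ j ∈ Finset.Ioi i, ((((j:ℕ) - (i:ℕ)) : ℕ) : K) with hP4
  set Mneg : K := ∏ i : Fin n, ∏ _j ∈ Finset.Ioi i, (-1 : K) with hMneg
  set W : K := ∏ i : Fin n, S ^ (νf i) with hW
  set T : K := ∏ j : Fin n, S ^ ((j:ℕ)) with hT
  -- factor the numerator pieces
  have f1 : (∏ i : Fin n, (S ^ (μf i) * R0 (μf i))) = S ^ (∑ i, lam i) * W * (Hook * Pd) := by
    rw [Finset.prod_mul_distrib]
    congr 1
    · rw [hW, ← Finset.prod_pow_eq_pow_sum, ← Finset.prod_mul_distrib]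
      exact Finset.prod_congr rfl fun i _ => by rw [hμf, pow_add]
    · rw [hHook, hPd, ← Finset.prod_mul_distrib]
      exact Finset.prod_congr rfl fun i _ => hookrow n lam hlam i
  have f2 : (∏ i : Fin n, (S ^ (νf i) * R0 (νf i))) = W * Pe := by
    rw [Finset.prod_mul_distrib]
    congr 1
    rw [hPe]
    refine Finset.prod_congr rfl fun i _ => ?_
    rw [show R0 (νf i) = ∏ t ∈ Finset.range (n - 1 - (i:ℕ)), (x + (t : K)) from rfl]
    exact (prod_Ioi_shift i (fun t => x + (t : K))).symm
  have f3 : (∏ i : Fin n, ∏ j ∈ Finset.Ioi i, ((μf j : K) - (μf i : K))) = Mneg * P3 := by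
    rw [hMneg, hP3, ← Finset.prod_mul_distrib]
    refine Finset.prod_congr rfl fun i _ => ?_
    rw [← Finset.prod_mul_distrib]
    refine Finset.prod_congr rfl fun j hj => ?_
    have hij : i < j := Finset.mem_Ioi.mp hj
    have h1 : lam j ≤ lam i := hlam hij.le
    have h2 : (i:ℕ) < (j:ℕ) := Fin.lt_def.mp hij
    have h3 : μf i = μf j + (lam i - lam j + ((j:ℕ) - (i:ℕ))) := by
      simp only [hμf]
      have := j.isLt
      omega
    rw [h3]
    push_cast
    ring
  have f4 : (∏ i : Fin n, ∏ j ∈ Finset.Ioi i, ((νf j : K) - (νf i : K))) = Mneg * P4 := by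
    rw [hMneg, hP4, ← Finset.prod_mul_distrib]
    refine Finset.prod_congr rfl fun i _ => ?_
    rw [← Finset.prod_mul_distrib]
    refine Finset.prod_congr rfl fun j hj => ?_
    have hij : i < j := Finset.mem_Ioi.mp hj
    have h2 : (i:ℕ) < (j:ℕ) := Fin.lt_def.mp hij
    have h3 : νf i = νf j + ((j:ℕ) - (i:ℕ)) := by
      simp only [hνf]
      have := j.isLt
      omega
    rw [h3]
    push_cast
    ring
  -- rewrite the RHS pair product
  have frhs : (∏ p ∈ Finset.univ.filter (fun p : Fin n × Fin n => p.1 < p.2),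
          (x + ((lam p.1 - lam p.2 : ℕ) : K) + (((p.2 : ℕ) - (p.1 : ℕ) - 1 : ℕ) : K)) *
              (((lam p.1 - lam p.2) + ((p.2 : ℕ) - (p.1 : ℕ)) : ℕ) : K) /
            ((x + (((p.2 : ℕ) - (p.1 : ℕ) - 1 : ℕ) : K)) * (((p.2 : ℕ) - (p.1 : ℕ) : ℕ) : K)))
      = (Pd * P3) / (Pe * P4) := by
    rw [prodpairs (f := fun i j : Fin n =>
      (x + ((lam i - lam j : ℕ) : K) + (((j : ℕ) - (i : ℕ) - 1 : ℕ) : K)) *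
          (((lam i - lam j) + ((j : ℕ) - (i : ℕ)) : ℕ) : K) /
        ((x + (((j : ℕ) - (i : ℕ) - 1 : ℕ) : K)) * (((j : ℕ) - (i : ℕ) : ℕ) : K)))]
    have step : ∀ i : Fin n, ∀ j ∈ Finset.Ioi i,
        (x + ((lam i - lam j : ℕ) : K) + (((j : ℕ) - (i : ℕ) - 1 : ℕ) : K)) *
            (((lam i - lam j) + ((j : ℕ) - (i : ℕ)) : ℕ) : K) /
          ((x + (((j : ℕ) - (i : ℕ) - 1 : ℕ) : K)) * (((j : ℕ) - (i : ℕ) : ℕ) : K))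
        = (x + (((lam i - lam j) + ((j:ℕ) - (i:ℕ) - 1) : ℕ) : K)) *
            (((lam i - lam j + ((j:ℕ) - (i:ℕ))) : ℕ) : K) /
          ((x + ((((j:ℕ) - (i:ℕ) - 1) : ℕ) : K)) * ((((j:ℕ) - (i:ℕ)) : ℕ) : K)) := by
      intro i j hj
      congr 2
      push_cast
      ring
    rw [Finset.prod_congr rfl fun i _ => Finset.prod_congr rfl fun j hj => step i j hj]
    have e1 : ∀ F G : Fin n → Fin n → K,
        (∏ i : Fin n, ∏ j ∈ Finset.Ioi i, F i j * G i j)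
          = (∏ i : Fin n, ∏ j ∈ Finset.Ioi i, F i j) *
            (∏ i : Fin n, ∏ j ∈ Finset.Ioi i, G i j) := by
      intro F G
      rw [← Finset.prod_mul_distrib]
      exact Finset.prod_congr rfl fun i _ => Finset.prod_mul_distrib
    have e2 : ∀ F G : Fin n → Fin n → K,
        (∏ i : Fin n, ∏ j ∈ Finset.Ioi i, F i j / G i j)
          = (∏ i : Fin n, ∏ j ∈ Finset.Ioi i, F i j) /
            (∏ i : Fin n, ∏ j ∈ Finset.Ioi i, G i j) := by
      intro F G
      rw [← Finset.prod_div_distrib]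
      exact Finset.prod_congr rfl fun i _ => Finset.prod_div_distrib _ _
    rw [hPd, hP3, hPe, hP4, e2, e1, e1]
  rw [frhs]
  -- nonvanishing
  have hε0 : ε ≠ 0 := by
    rw [hε]
    rcases Int.units_eq_one_or (Equiv.Perm.sign (Fin.revPerm : Equiv.Perm (Fin n))) with h | h <;>
      rw [h] <;> norm_num
  have hW0 : W ≠ 0 := Finset.prod_ne_zero_iff.mpr fun i _ => pow_ne_zero _ S_ne
  have hT0 : T ≠ 0 := Finset.prod_ne_zero_iff.mpr fun i _ => pow_ne_zero _ S_ne
  have hPe0 : Pe ≠ 0 := Finset.prod_ne_zero_iff.mpr fun i _ =>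
    Finset.prod_ne_zero_iff.mpr fun k _ => x_add_ne _
  have hMneg0 : Mneg ≠ 0 := Finset.prod_ne_zero_iff.mpr fun i _ =>
    Finset.prod_ne_zero_iff.mpr fun k _ => by norm_num
  have hP40 : P4 ≠ 0 := Finset.prod_ne_zero_iff.mpr fun i _ =>
    Finset.prod_ne_zero_iff.mpr fun j hj => by
      have hij : i < j := Finset.mem_Ioi.mp hj
      have h2 : (i:ℕ) < (j:ℕ) := Fin.lt_def.mp hij
      exact natc_ne _ (by omega)
  rw [f1, f2, f3, f4]
  have key : ∀ a h pd p3 pe p4 e w t mm : K, e ≠ 0 → w ≠ 0 → t ≠ 0 → mm ≠ 0 →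
      pe ≠ 0 → p4 ≠ 0 →
      e * (a * w * (h * pd) * t * (mm * p3)) / (e * (w * pe * t * (mm * p4)))
        = a * h * (pd * p3 / (pe * p4)) := by
    intro a h pd p3 pe p4 e w t mm he hw ht hmm hpe hp4
    rw [mul_div_mul_left _ _ he]
    have hDne : w * pe * t * (mm * p4) ≠ 0 :=
      mul_ne_zero (mul_ne_zero (mul_ne_zero hw hpe) ht) (mul_ne_zero hmm hp4)
    have hpep4 : pe * p4 ≠ 0 := mul_ne_zero hpe hp4
    rw [show a * h * (pd * p3 / (pe * p4)) = a * h * (pd * p3) / (pe * p4) from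
      (mul_div_assoc _ _ _).symm]
    rw [div_eq_div_iff hDne hpep4]
    ring
  exact key _ _ _ _ _ _ _ _ _ _ hε0 hW0 hT0 hMneg0 hPe0 hP40

end Stmt16
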